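/- There exists a Borel measurable map 𝕀 from {(X, A) ∈ K(Q) × K(Q) : A ⊆ X} to K(Q × [0,1]) such that for every pair (X, A) in the domain there is a sequence d : {1,2,...} → A whose range is dense in A and each of whose values is attained at infinitely many indices, with 𝕀(X, A) = (X × {0}) ∪ {(d_n, 1/n) : n ≥ 1}. -/

import Mathlib

open Set Topology TopologicalSpace

/-- The Hilbert cube `Q = ∏_{n ∈ ℕ} [0,1]`. -/
abbrev Q : Type := ℕ → unitInterval

/-- A (non-canonical) metric on the Hilbert cube inducing the product topology. -/
noncomputable instance : MetricSpace Q := PiCountable.metricSpace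

noncomputable instance : MeasurableSpace (NonemptyCompacts Q) := borel _
instance : BorelSpace (NonemptyCompacts Q) := ⟨rfl⟩

noncomputable instance : MeasurableSpace (NonemptyCompacts (Q × unitInterval)) := borel _
instance : BorelSpace (NonemptyCompacts (Q × unitInterval)) := ⟨rfl⟩

/-- The point `1/n ∈ [0,1]` (indexed by `n : ℕ`, as `1/(n+1)`). -/
noncomputable def un (n : ℕ) : unitInterval :=
  ⟨1 / (n + 1 : ℝ), by
    constructor
    · positivity
    · rw [div_le_one (by positivity)]
      have : (0 : ℝ) ≤ (n : ℝ) := Nat.cast_nonneg n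
      linarith⟩



noncomputable def bexp (x : ℕ → Bool) : ℝ := ∑' j, cond (x j) ((1/2:ℝ)^(j+1)) 0

lemma bexp_term_nonneg (x : ℕ → Bool) (j : ℕ) : 0 ≤ cond (x j) ((1/2:ℝ)^(j+1)) 0 := by
  cases x j <;> simp
lemma bexp_term_le (x : ℕ → Bool) (j : ℕ) : cond (x j) ((1/2:ℝ)^(j+1)) 0 ≤ (1/2:ℝ)^(j+1) := by
  cases x j with
  | false => simpa using by positivity
  | true => simp
lemma summable_half : Summable (fun j : ℕ => ((1/2:ℝ))^(j+1)) :=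
  (summable_geometric_of_lt_one (by norm_num) (by norm_num)).comp_injective (add_left_injective 1)
lemma tsum_half : ∑' j : ℕ, ((1/2:ℝ))^(j+1) = 1 := by
  have := tsum_geometric_two' 1
  refine Eq.trans ?_ this
  congr 1
  funext j
  rw [pow_succ, one_div_pow, one_div, one_div, div_eq_mul_inv, mul_comm]

lemma summable_bexp (x : ℕ → Bool) : Summable (fun j => cond (x j) ((1/2:ℝ)^(j+1)) 0) :=
  Summable.of_nonneg_of_le (bexp_term_nonneg x) (bexp_term_le x) summable_half

lemma bexp_nonneg (x : ℕ → Bool) : 0 ≤ bexp x := tsum_nonneg (bexp_term_nonneg x)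

lemma bexp_le_one (x : ℕ → Bool) : bexp x ≤ 1 :=
  calc bexp x ≤ ∑' j : ℕ, ((1/2:ℝ))^(j+1) :=
        Summable.tsum_le_tsum (bexp_term_le x) (summable_bexp x) summable_half
    _ = 1 := tsum_half

lemma continuous_bexp : Continuous bexp := by
  apply continuous_tsum (u := fun j : ℕ => ((1/2:ℝ))^(j+1))
  · intro j
    exact Continuous.comp (continuous_of_discreteTopology (f := fun b : Bool => cond b ((1/2:ℝ)^(j+1)) 0)) (continuous_apply j)
  · exact summable_half
  · intro j x
    rw [Real.norm_eq_abs, abs_of_nonneg (bexp_term_nonneg x j)]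
    exact bexp_term_le x j

lemma bexp_surjOn : ∀ r : ℝ, 0 ≤ r → r ≤ 1 → ∃ x : ℕ → Bool, bexp x = r := by
  intro r h0 h1
  rcases eq_or_lt_of_le h1 with rfl | h1
  · exact ⟨fun _ => true, by simp only [bexp, cond_true]; exact tsum_half⟩
  · -- binary digits
    set k : ℕ → ℕ := fun j => ⌊r * 2^j⌋₊ with hk
    have hk0 : k 0 = 0 := by
      simp [hk, Nat.floor_eq_zero, h1]
    have hstep : ∀ j, k (j+1) = 2 * k j ∨ k (j+1) = 2 * k j + 1 := by
      intro j
      have hlow : 2 * k j ≤ k (j+1) := by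
        rw [hk]
        apply Nat.le_floor
        push_cast
        have : (⌊r * 2^j⌋₊ : ℝ) ≤ r * 2^j := Nat.floor_le (by positivity)
        calc (2:ℝ) * ⌊r * 2^j⌋₊ ≤ 2 * (r * 2^j) := by linarith
          _ = r * 2^(j+1) := by ring
      have hhigh : k (j+1) < 2 * k j + 2 := by
        rw [hk]
        apply Nat.floor_lt (by positivity) |>.2
        have : r * 2^j < ⌊r * 2^j⌋₊ + 1 := Nat.lt_floor_add_one _
        push_cast
        calc r * 2^(j+1) = 2 * (r * 2^j) := by ring
          _ < 2 * (⌊r * 2^j⌋₊ + 1) := by linarith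
          _ = 2 * ⌊r * 2^j⌋₊ + 2 := by ring
      omega
    refine ⟨fun j => decide (k (j+1) = 2 * k j + 1), ?_⟩
    rw [bexp]
    have hfloor : ∀ n, ∑ j ∈ Finset.range n, cond (decide (k (j+1) = 2 * k j + 1)) ((1/2:ℝ)^(j+1)) 0 = (k n : ℝ) / 2^n := by
      intro n
      induction n with
      | zero => simp [hk0]
      | succ n ih =>
        rw [Finset.sum_range_succ, ih]
        rcases hstep n with h | h
        · simp only [h]
          rw [decide_eq_false (by omega)]
          simp only [cond_false, add_zero]
          push_cast
          field_simp
          ring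
        · rw [h, decide_eq_true (by rfl)]
          simp only [cond_true]
          push_cast
          simp only [one_div, inv_pow]
          field_simp
          ring
    have : HasSum (fun j => cond (decide (k (j+1) = 2 * k j + 1)) ((1/2:ℝ)^(j+1)) 0) r := by
      refine (hasSum_iff_tendsto_nat_of_nonneg ?_ r).2 ?_
      · exact fun i => bexp_term_nonneg (fun j => decide (k (j+1) = 2 * k j + 1)) i
      simp only [hfloor]
      have h2 : Filter.Tendsto (fun n : ℕ => r - (2:ℝ)⁻¹^n) Filter.atTop (nhds r) := by
        simpa using Filter.Tendsto.const_sub r (tendsto_pow_atTop_nhds_zero_of_lt_one (r := (2:ℝ)⁻¹) (by norm_num) (by norm_num))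
      apply tendsto_of_tendsto_of_tendsto_of_le_of_le h2 tendsto_const_nhds
      · intro n
        have : r * 2^n < ⌊r * 2^n⌋₊ + 1 := Nat.lt_floor_add_one _
        simp only [hk, inv_pow]
        rw [sub_le_iff_le_add, div_add' _ _ _ (by positivity)]
        rw [le_div_iff₀ (by positivity)]
        have h2n : ((2:ℝ)^n)⁻¹ * 2^n = 1 := by field_simp
        nlinarith [pow_pos (by norm_num : (0:ℝ) < 2) n]
      · intro n
        have : (⌊r * 2^n⌋₊ : ℝ) ≤ r * 2^n := Nat.floor_le (by positivity)
        rw [div_le_iff₀ (by positivity)]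
        exact this
    exact this.tsum_eq
abbrev CC : Type := ℕ → Bool

noncomputable def phi (x : CC) : Q := fun n =>
  ⟨bexp (fun j => x (Nat.pair n j)), bexp_nonneg _, bexp_le_one _⟩

lemma continuous_phi : Continuous phi := by
  apply continuous_pi
  intro n
  apply Continuous.subtype_mk
  exact continuous_bexp.comp (continuous_pi fun j => continuous_apply (Nat.pair n j))

lemma phi_surj : Function.Surjective phi := by
  intro q
  have h : ∀ n, ∃ y : CC, bexp y = (q n : ℝ) := fun n => bexp_surjOn _ (q n).2.1 (q n).2.2
  choose y hy using h
  refine ⟨fun m => y m.unpair.1 m.unpair.2, ?_⟩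
  funext n
  apply Subtype.ext
  show bexp (fun j => y (Nat.pair n j).unpair.1 (Nat.pair n j).unpair.2) = (q n : ℝ)
  simp only [Nat.unpair_pair]
  exact hy n

/-! ### Lexicographic minimum machinery -/

def wordCyl (j n : ℕ) : Set CC := {x | ∀ i, i < j → x i = n.testBit (j - 1 - i)}

/-- encode the first `j` bits of `x` as a number (most significant first). -/
def enc (x : CC) : ℕ → ℕ
  | 0 => 0
  | j+1 => 2 * enc x j + cond (x j) 1 0

lemma enc_lt (x : CC) : ∀ j, enc x j < 2^j
  | 0 => by simp [enc]
  | j+1 => by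
    have := enc_lt x j
    cases hx : x j <;> simp [enc, hx, pow_succ] <;> omega

lemma testBit_two_mul_add_zero (m b : ℕ) (hb : b < 2) : (2*m + b).testBit 0 = decide (b = 1) := by
  rw [Nat.testBit_zero]
  rcases (by omega : b = 0 ∨ b = 1) with rfl | rfl <;> simp [Nat.mul_add_mod] <;> omega

lemma testBit_two_mul_add_succ (m b k : ℕ) (hb : b < 2) : (2*m + b).testBit (k+1) = m.testBit k := by
  rw [Nat.testBit_add_one]
  congr 1
  omega

lemma mem_wordCyl_enc (x : CC) : ∀ j, x ∈ wordCyl j (enc x j)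
  | 0 => by intro i hi; omega
  | j+1 => by
    intro i hi
    have hx := mem_wordCyl_enc x j
    have hb : (cond (x j) 1 0) < 2 := by cases x j <;> simp
    rcases Nat.lt_succ_iff_lt_or_eq.1 hi with hij | rfl
    · have hpos : j + 1 - 1 - i = (j - 1 - i) + 1 := by omega
      rw [enc, hpos, testBit_two_mul_add_succ _ _ _ hb]
      exact hx i hij
    · have hpos : i + 1 - 1 - i = 0 := by omega
      rw [enc, hpos, testBit_two_mul_add_zero _ _ hb]
      cases x i <;> simp

/-- the minimal index of a word of length `j` whose cylinder meets `S`. -/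
noncomputable def mIdx (S : Set CC) (j : ℕ) : ℕ := sInf {n | (S ∩ wordCyl j n).Nonempty}

lemma mIdx_spec {S : Set CC} (hS : S.Nonempty) (j : ℕ) :
    (S ∩ wordCyl j (mIdx S j)).Nonempty ∧ ∀ n, (S ∩ wordCyl j n).Nonempty → mIdx S j ≤ n := by
  obtain ⟨x, hx⟩ := hS
  have hne : {n | (S ∩ wordCyl j n).Nonempty}.Nonempty := ⟨enc x j, x, hx, mem_wordCyl_enc x j⟩
  exact ⟨Nat.sInf_mem hne, fun n hn => Nat.sInf_le hn⟩

lemma wordCyl_succ_subset (j n : ℕ) : wordCyl (j+1) n ⊆ wordCyl j (n/2) := by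
  intro x hx i hi
  have := hx i (by omega)
  rw [this]
  rw [← Nat.testBit_add_one]
  congr 1
  omega

lemma mIdx_succ {S : Set CC} (hS : S.Nonempty) (j : ℕ) :
    mIdx S (j+1) / 2 = mIdx S j := by
  obtain ⟨⟨x, hxS, hxc⟩, hmin⟩ := mIdx_spec hS (j+1)
  obtain ⟨⟨y, hyS, hyc⟩, hmin'⟩ := mIdx_spec hS j
  have h1 : mIdx S j ≤ mIdx S (j+1) / 2 :=
    hmin' _ ⟨x, hxS, wordCyl_succ_subset _ _ hxc⟩
  -- converse: extend y
  have hb : (cond (y j) 1 0) < 2 := by cases y j <;> simp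
  have hy2 : y ∈ wordCyl (j+1) (2 * mIdx S j + cond (y j) 1 0) := by
    intro i hi
    rcases Nat.lt_succ_iff_lt_or_eq.1 hi with hij | rfl
    · have hpos : j + 1 - 1 - i = (j - 1 - i) + 1 := by omega
      rw [hpos, testBit_two_mul_add_succ _ _ _ hb]
      exact hyc i hij
    · have hpos : i + 1 - 1 - i = 0 := by omega
      rw [hpos, testBit_two_mul_add_zero _ _ hb]
      cases y i <;> simp
  have h2 : mIdx S (j+1) ≤ 2 * mIdx S j + cond (y j) 1 0 := hmin _ ⟨y, hyS, hy2⟩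
  omega

/-- The lexicographically minimal point whose finite prefixes all meet `S`. -/
noncomputable def lexPt (S : Set CC) : CC := fun i => (mIdx S (i+1)).testBit 0

lemma testBit_eq_div_pow (n : ℕ) : ∀ k, n.testBit k = (n / 2^k).testBit 0 := by
  intro k
  induction k generalizing n with
  | zero => simp
  | succ k ih =>
    rw [Nat.testBit_add_one, ih (n/2)]
    congr 1
    rw [Nat.div_div_eq_div_mul]
    congr 1
    ring

lemma mIdx_div_pow {S : Set CC} (hS : S.Nonempty) (j k : ℕ) (h : k ≤ j) :
    mIdx S j / 2^(j - k) = mIdx S k := by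
  induction j with
  | zero => have : k = 0 := by omega
            subst this; simp
  | succ j ih =>
    rcases Nat.lt_succ_iff_lt_or_eq.1 (Nat.lt_succ_of_le h) with hlt | rfl
    · have hk : k ≤ j := by omega
      have : j + 1 - k = (j - k) + 1 := by omega
      rw [this, pow_succ', ← Nat.div_div_eq_div_mul, mIdx_succ hS, ih hk]
    · simp

lemma lexPt_prefix {S : Set CC} (hS : S.Nonempty) {j i : ℕ} (h : i < j) :
    (mIdx S j).testBit (j - 1 - i) = lexPt S i := by
  rw [lexPt, testBit_eq_div_pow]
  have h1 : j - 1 - i = j - (i+1) := by omega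
  rw [h1, mIdx_div_pow hS j (i+1) (by omega)]

lemma lexPt_mem_wordCyl {S : Set CC} (hS : S.Nonempty) (j : ℕ) :
    lexPt S ∈ wordCyl j (mIdx S j) := fun i hi => (lexPt_prefix hS hi).symm

lemma lexPt_mem {S : Set CC} (hcl : IsClosed S) (hS : S.Nonempty) : lexPt S ∈ S := by
  have hmem : lexPt S ∈ closure S := ?_
  · rwa [hcl.closure_eq] at hmem
  rw [mem_closure_iff]
  intro o ho hmem
  obtain ⟨I, u, hu, hsub⟩ := isOpen_pi_iff.1 ho _ hmem
  obtain ⟨x, hxS, hxc⟩ := (mIdx_spec hS ((I.sup id) + 1)).1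
  refine ⟨x, hsub ?_, hxS⟩
  intro i hiI
  have hi : i < (I.sup id) + 1 := Nat.lt_succ_of_le (Finset.le_sup (f := id) hiI)
  have : x i = lexPt S i := by
    rw [hxc i hi, lexPt_prefix hS hi]
  rw [this]
  exact (hu i hiI).2

/-! ### Selectors -/

def listCyl (v : List Bool) : Set CC := {x | ∀ i, (h : i < v.length) → x i = v[i]}

lemma isClosed_listCyl (v : List Bool) : IsClosed (listCyl v) := by
  have : listCyl v = ⋂ (i : Fin v.length), {x : CC | x i.1 = v[i.1]} := by
    ext x; simp [listCyl, Fin.forall_iff]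
  rw [this]
  exact isClosed_iInter fun i => IsClosed.preimage (continuous_apply (i:ℕ)) isClosed_singleton

lemma isClosed_wordCyl (j n : ℕ) : IsClosed (wordCyl j n) := by
  have : wordCyl j n = ⋂ (i : Fin j), {x : CC | x i.1 = n.testBit (j - 1 - i.1)} := by
    ext x; simp [wordCyl, Fin.forall_iff]
  rw [this]
  exact isClosed_iInter fun i => IsClosed.preimage (continuous_apply (i:ℕ)) isClosed_singleton

noncomputable def KA (A : NonemptyCompacts Q) : Set CC := phi ⁻¹' (A : Set Q)

lemma isClosed_KA (A : NonemptyCompacts Q) : IsClosed (KA A) :=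
  IsClosed.preimage continuous_phi A.isCompact.isClosed

lemma nonempty_KA (A : NonemptyCompacts Q) : (KA A).Nonempty := by
  obtain ⟨a, ha⟩ := A.nonempty
  obtain ⟨x, rfl⟩ := phi_surj a
  exact ⟨x, ha⟩

/-- the "hitting" sets are closed in `K(Q)`. -/
lemma isClosed_hit (T : Set Q) (hT : IsCompact T) :
    IsClosed {A : NonemptyCompacts Q | ((A : Set Q) ∩ T).Nonempty} := by
  rcases T.eq_empty_or_nonempty with rfl | hTne
  · simp only [Set.inter_empty]
    convert isClosed_empty
    simp [Set.eq_empty_iff_forall_notMem]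
  rw [← isOpen_compl_iff, Metric.isOpen_iff]
  intro A hA
  have hdisj : Disjoint (A : Set Q) T := by
    rw [Set.disjoint_iff_inter_eq_empty, ← Set.not_nonempty_iff_eq_empty]
    exact hA
  obtain ⟨δ, hδ, hdis⟩ := hdisj.exists_thickenings A.isCompact hT.isClosed
  refine ⟨δ, hδ, fun A' hA' => ?_⟩
  simp only [mem_compl_iff, mem_setOf_eq]
  rintro ⟨y, hyA', hyT⟩
  have fin : EMetric.hausdorffEdist (A' : Set Q) (A : Set Q) ≠ ⊤ :=
    Metric.hausdorffEdist_ne_top_of_nonempty_of_bounded A'.nonempty A.nonempty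
      A'.isCompact.isBounded A.isCompact.isBounded
  have h1 : Metric.infDist y (A : Set Q) < δ := by
    calc Metric.infDist y (A : Set Q)
        ≤ Metric.hausdorffDist (A' : Set Q) (A : Set Q) :=
          Metric.infDist_le_hausdorffDist_of_mem hyA' fin
      _ < δ := by rw [← Metric.NonemptyCompacts.dist_eq]; exact Metric.mem_ball.1 hA'
  have hythick : y ∈ Metric.thickening δ (A : Set Q) :=
    (Metric.mem_thickening_iff_infDist_lt A.nonempty).2 h1
  exact Set.disjoint_left.1 hdis hythick (Metric.self_subset_thickening hδ T hyT)

lemma hit_iff (A : NonemptyCompacts Q) (T : Set CC) :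
    (KA A ∩ T).Nonempty ↔ ((A : Set Q) ∩ phi '' T).Nonempty := by
  constructor
  · rintro ⟨x, hxA, hxT⟩
    exact ⟨phi x, hxA, x, hxT, rfl⟩
  · rintro ⟨y, hyA, x, hxT, rfl⟩
    exact ⟨x, hyA, hxT⟩

lemma measurableSet_hitC (T : Set CC) (hT : IsClosed T) :
    MeasurableSet {A : NonemptyCompacts Q | (KA A ∩ T).Nonempty} := by
  have : {A : NonemptyCompacts Q | (KA A ∩ T).Nonempty}
      = {A : NonemptyCompacts Q | ((A : Set Q) ∩ phi '' T).Nonempty} := by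
    ext A; exact hit_iff A T
  rw [this]
  exact (isClosed_hit _ ((hT.isCompact).image continuous_phi)).measurableSet

open scoped Classical in
noncomputable def selSet (v : List Bool) (A : NonemptyCompacts Q) : Set CC :=
  if (KA A ∩ listCyl v).Nonempty then KA A ∩ listCyl v else KA A

lemma selSet_closed (v : List Bool) (A : NonemptyCompacts Q) : IsClosed (selSet v A) := by
  rw [selSet]
  split
  · exact (isClosed_KA A).inter (isClosed_listCyl v)
  · exact isClosed_KA A

lemma selSet_nonempty (v : List Bool) (A : NonemptyCompacts Q) : (selSet v A).Nonempty := by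
  rw [selSet]
  split
  · assumption
  · exact nonempty_KA A

lemma selSet_subset (v : List Bool) (A : NonemptyCompacts Q) : selSet v A ⊆ KA A := by
  rw [selSet]; split
  · exact Set.inter_subset_left
  · exact le_refl _

noncomputable def sel (v : List Bool) (A : NonemptyCompacts Q) : Q := phi (lexPt (selSet v A))

lemma sel_mem (v : List Bool) (A : NonemptyCompacts Q) : sel v A ∈ (A : Set Q) :=
  selSet_subset v A (lexPt_mem (selSet_closed v A) (selSet_nonempty v A))

lemma measurableSet_selSet_hit (v : List Bool) (W : Set CC) (hW : IsClosed W) :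
    MeasurableSet {A : NonemptyCompacts Q | (selSet v A ∩ W).Nonempty} := by
  have : {A : NonemptyCompacts Q | (selSet v A ∩ W).Nonempty}
      = ({A : NonemptyCompacts Q | (KA A ∩ listCyl v).Nonempty}
          ∩ {A : NonemptyCompacts Q | (KA A ∩ (listCyl v ∩ W)).Nonempty})
        ∪ ({A : NonemptyCompacts Q | (KA A ∩ listCyl v).Nonempty}ᶜ
          ∩ {A : NonemptyCompacts Q | (KA A ∩ W).Nonempty}) := by
    ext A
    by_cases h : (KA A ∩ listCyl v).Nonempty
    · simp only [selSet, if_pos h, if_true, mem_union, mem_inter_iff, mem_setOf_eq, mem_compl_iff, h,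
        not_true, false_and, or_false, true_and]
      rw [Set.inter_assoc]
    · simp only [selSet, if_neg h, if_false, mem_union, mem_inter_iff, mem_setOf_eq, mem_compl_iff, h,
        false_and, false_or, not_false_iff, true_and]
  rw [this]
  exact ((measurableSet_hitC _ (isClosed_listCyl v)).inter
      (measurableSet_hitC _ ((isClosed_listCyl v).inter hW))).union
    (((measurableSet_hitC _ (isClosed_listCyl v)).compl).inter (measurableSet_hitC _ hW))

lemma measurable_mIdx (v : List Bool) (j : ℕ) :
    Measurable (fun A => mIdx (selSet v A) j) := by
  apply measurable_to_countable'
  intro n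
  have : (fun A => mIdx (selSet v A) j) ⁻¹' {n}
      = {A : NonemptyCompacts Q | (selSet v A ∩ wordCyl j n).Nonempty}
        ∩ ⋂ (m : ℕ) (_ : m < n), {A : NonemptyCompacts Q | (selSet v A ∩ wordCyl j m).Nonempty}ᶜ := by
    ext A
    simp only [mem_preimage, mem_singleton_iff, mem_inter_iff, mem_setOf_eq, mem_iInter,
      mem_compl_iff]
    constructor
    · rintro rfl
      exact ⟨(mIdx_spec (selSet_nonempty v A) j).1,
        fun m hm hne => absurd ((mIdx_spec (selSet_nonempty v A) j).2 m hne) (by omega)⟩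
    · rintro ⟨h1, h2⟩
      have hle := (mIdx_spec (selSet_nonempty v A) j).2 n h1
      rcases lt_or_eq_of_le hle with hlt | heq
      · exact absurd (mIdx_spec (selSet_nonempty v A) j).1 (h2 _ hlt)
      · exact heq
  rw [this]
  exact (measurableSet_selSet_hit v _ (isClosed_wordCyl j n)).inter
    (MeasurableSet.iInter fun m => MeasurableSet.iInter fun _ =>
      (measurableSet_selSet_hit v _ (isClosed_wordCyl j m)).compl)

lemma measurable_sel (v : List Bool) : Measurable (sel v) := by
  have h1 : Measurable (fun A => lexPt (selSet v A)) := by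
    apply measurable_pi_lambda
    intro i
    exact (measurable_from_top (f := fun n : ℕ => n.testBit 0)).comp (measurable_mIdx v (i+1))
  exact continuous_phi.measurable.comp h1

lemma sel_dense (A : NonemptyCompacts Q) {a : Q} (ha : a ∈ (A : Set Q)) {ε : ℝ} (hε : 0 < ε) :
    ∃ v : List Bool, dist (sel v A) a < ε := by
  obtain ⟨x, rfl⟩ := phi_surj a
  have hx : x ∈ KA A := ha
  have hU : IsOpen (phi ⁻¹' Metric.ball (phi x) ε) :=
    continuous_phi.isOpen_preimage _ Metric.isOpen_ball
  have hmem : x ∈ phi ⁻¹' Metric.ball (phi x) ε := by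
    simp [Metric.mem_ball, hε]
  obtain ⟨I, u, hu, hsub⟩ := isOpen_pi_iff.1 hU x hmem
  set j := I.sup id + 1 with hj
  set v := List.ofFn (fun i : Fin j => x i) with hv
  have hlen : v.length = j := by rw [hv, List.length_ofFn]
  have hvi : ∀ i, (h : i < v.length) → v[i] = x i := by
    intro i h
    simp only [hv, List.getElem_ofFn]
  have hxv : x ∈ listCyl v := fun i h => (hvi i h).symm
  have hne : (KA A ∩ listCyl v).Nonempty := ⟨x, hx, hxv⟩
  have hsel : selSet v A = KA A ∩ listCyl v := if_pos hne
  have hy : lexPt (selSet v A) ∈ selSet v A :=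
    lexPt_mem (selSet_closed v A) (selSet_nonempty v A)
  have hyv : lexPt (selSet v A) ∈ listCyl v := by
    have hss : selSet v A ⊆ listCyl v := by
      rw [hsel]; exact Set.inter_subset_right
    exact hss hy
  have hYU : lexPt (selSet v A) ∈ phi ⁻¹' Metric.ball (phi x) ε := by
    apply hsub
    intro i hiI
    have hij : i < j := Nat.lt_succ_of_le (Finset.le_sup (f := id) hiI)
    have : lexPt (selSet v A) i = x i := by
      have := hyv i (by omega : i < v.length)
      rw [this, hvi]
    rw [this]
    exact (hu i hiI).2
  refine ⟨v, ?_⟩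
  have := Metric.mem_ball.1 hYU
  rwa [dist_comm] at this

/-! ### The sequence and the interpolation set -/

noncomputable def dec (n : ℕ) : List Bool :=
  (Encodable.decode (α := List Bool) n.unpair.1).getD []

noncomputable def dSeq (A : NonemptyCompacts Q) (n : ℕ) : Q := sel (dec n) A

lemma dSeq_pair (A : NonemptyCompacts Q) (k j : ℕ) :
    dSeq A (Nat.pair k j) = sel ((Encodable.decode (α := List Bool) k).getD []) A := by
  rw [dSeq, dec, Nat.unpair_pair]

lemma dSeq_mem (A : NonemptyCompacts Q) (n : ℕ) : dSeq A n ∈ (A : Set Q) := sel_mem _ A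

lemma dSeq_dense (A : NonemptyCompacts Q) : (A : Set Q) ⊆ closure (Set.range (dSeq A)) := by
  intro a ha
  rw [Metric.mem_closure_iff]
  intro ε hε
  obtain ⟨v, hv⟩ := sel_dense A ha hε
  refine ⟨dSeq A (Nat.pair (Encodable.encode v) 0), ⟨_, rfl⟩, ?_⟩
  rw [dSeq_pair, Encodable.encodek]
  simpa [dist_comm] using hv

lemma dSeq_infinite (A : NonemptyCompacts Q) (n : ℕ) :
    {m : ℕ | dSeq A m = dSeq A n}.Infinite := by
  apply Set.infinite_of_injective_forall_mem (f := fun j : ℕ => Nat.pair n.unpair.1 j)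
  · intro a b hab
    have := congrArg Nat.unpair hab
    simpa [Nat.unpair_pair] using this
  · intro j
    simp only [mem_setOf_eq]
    rw [dSeq_pair, dSeq, dec]

noncomputable def gSeq (A : NonemptyCompacts Q) : ℕ → Q × unitInterval :=
  fun n => (dSeq A n, un n)

lemma un_coe (n : ℕ) : (un n : ℝ) = 1 / (n + 1 : ℝ) := rfl

lemma un_pos (n : ℕ) : (0:ℝ) < un n := by rw [un_coe]; positivity

lemma un_anti {n m : ℕ} (h : n ≤ m) : (un m : ℝ) ≤ un n := by
  rw [un_coe, un_coe]
  apply div_le_div_of_nonneg_left (by norm_num) (by positivity)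
  exact_mod_cast by omega

def bigSet (X A : NonemptyCompacts Q) : Set (Q × unitInterval) :=
  ((fun x => (x, (0 : unitInterval))) '' (X : Set Q)) ∪ Set.range (gSeq A)

lemma bigSet_fst {X A : NonemptyCompacts Q} (hAX : (A : Set Q) ⊆ (X : Set Q))
    {z : Q × unitInterval} (hz : z ∈ bigSet X A) : z.1 ∈ (X : Set Q) := by
  rcases hz with ⟨x, hx, rfl⟩ | ⟨n, rfl⟩
  · exact hx
  · exact hAX (dSeq_mem A n)

lemma isClosed_bigSet (X A : NonemptyCompacts Q) (hAX : (A : Set Q) ⊆ (X : Set Q)) :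
    IsClosed (bigSet X A) := by
  rw [← isOpen_compl_iff, Metric.isOpen_iff]
  intro y hy
  by_cases ht : y.2 = 0
  · have hy1 : y.1 ∉ (X : Set Q) := by
      intro hmem
      apply hy
      left
      exact ⟨y.1, hmem, by rw [← ht]⟩
    have hpos : 0 < Metric.infDist y.1 (X : Set Q) :=
      (X.isCompact.isClosed.notMem_iff_infDist_pos X.nonempty).1 hy1
    refine ⟨_, hpos, fun z hz => ?_⟩
    simp only [mem_compl_iff]
    intro hzbig
    have h1 : Metric.infDist y.1 (X : Set Q) ≤ dist y.1 z.1 :=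
      Metric.infDist_le_dist_of_mem (bigSet_fst hAX hzbig)
    have h2 : dist y.1 z.1 ≤ dist y z := by
      rw [Prod.dist_eq]; exact le_max_left _ _
    have h3 : dist y z < Metric.infDist y.1 (X : Set Q) := by
      rw [dist_comm]; exact Metric.mem_ball.1 hz
    linarith
  · have htpos : (0:ℝ) < (y.2 : ℝ) := by
      rcases lt_or_eq_of_le y.2.2.1 with h | h
      · exact h
      · exact absurd (Subtype.ext h.symm) ht
    obtain ⟨N, hN⟩ := exists_nat_gt (2 / (y.2 : ℝ))
    have hNlt : (1:ℝ) / (N + 1) < (y.2 : ℝ) / 2 := by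
      rw [div_lt_div_iff₀ (by positivity) (by norm_num)]
      have h2 : 2 / (y.2 : ℝ) < N + 1 := by linarith
      rw [div_lt_iff₀ htpos] at h2
      linarith
    set s : Finset ℝ := insert ((y.2 : ℝ) / 2)
      ((Finset.range N).image (fun n => dist y (gSeq A n))) with hs
    have hsne : s.Nonempty := ⟨_, Finset.mem_insert_self _ _⟩
    set δ := s.min' hsne with hδdef
    have hδpos : 0 < δ := by
      apply (Finset.lt_min'_iff s hsne).2
      intro b hb
      rcases Finset.mem_insert.1 hb with rfl | hb
      · positivity
      · obtain ⟨n, _, rfl⟩ := Finset.mem_image.1 hb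
        rw [dist_pos]
        intro hEq
        exact hy (Or.inr ⟨n, hEq.symm⟩)
    have hδle : δ ≤ (y.2 : ℝ) / 2 := Finset.min'_le s _ (Finset.mem_insert_self _ _)
    refine ⟨δ, hδpos, fun z hz => ?_⟩
    simp only [mem_compl_iff]
    intro hzbig
    have hzy : dist z y < δ := Metric.mem_ball.1 hz
    have hsnd : dist y.2 z.2 ≤ dist y z := by
      rw [Prod.dist_eq]; exact le_max_right _ _
    rcases hzbig with ⟨x, _, rfl⟩ | ⟨n, rfl⟩
    · -- z = (x, 0)
      have hd : dist y.2 ((x, (0 : unitInterval))).2 = (y.2 : ℝ) := by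
        rw [Subtype.dist_eq]
        simp [abs_of_nonneg y.2.2.1]
      rw [dist_comm] at hzy
      rw [hd] at hsnd
      linarith
    · rcases lt_or_ge n N with hn | hn
      · have : δ ≤ dist y (gSeq A n) :=
          Finset.min'_le s _ (Finset.mem_insert_of_mem
            (Finset.mem_image.2 ⟨n, Finset.mem_range.2 hn, rfl⟩))
        rw [dist_comm] at hzy
        linarith
      · have hun : (un n : ℝ) ≤ 1 / (N + 1 : ℝ) := by
          have := un_anti hn
          rw [un_coe] at this
          exact this
        have h1 : dist y.2 (un n) = |(y.2 : ℝ) - (un n : ℝ)| := Subtype.dist_eq _ _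
        have h2 : (y.2 : ℝ) / 2 < |(y.2 : ℝ) - (un n : ℝ)| := by
          rw [abs_of_nonneg (by linarith [un_pos n])]
          linarith
        rw [dist_comm] at hzy
        have hle : dist y.2 (gSeq A n).2 ≤ dist y (gSeq A n) := hsnd
        simp only [gSeq] at hle hzy
        linarith

/-! ### Finite approximations and measurability -/

lemma isCompact_image_zero (X : NonemptyCompacts Q) :
    IsCompact ((fun x => (x, (0 : unitInterval))) '' (X : Set Q)) :=
  X.isCompact.image (Continuous.prodMk continuous_id continuous_const)

noncomputable def Psi (m : ℕ) (P : NonemptyCompacts Q × (ℕ → Q)) :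
    NonemptyCompacts (Q × unitInterval) :=
  ⟨⟨((fun x => (x, (0 : unitInterval))) '' (P.1 : Set Q)) ∪
      ((fun n => (P.2 n, un n)) '' (Set.Iio m)),
    (isCompact_image_zero P.1).union (((Set.finite_Iio m).image _).isCompact)⟩,
    by
      obtain ⟨x, hx⟩ := P.1.nonempty
      exact ⟨(x, 0), Or.inl ⟨x, hx, rfl⟩⟩⟩

lemma psi_hd_le (m : ℕ) (P P' : NonemptyCompacts Q × (ℕ → Q)) {r : ℝ} (hr : 0 ≤ r)
    (hX : Metric.hausdorffDist (P.1 : Set Q) (P'.1 : Set Q) ≤ r)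
    (hs : ∀ n < m, dist (P.2 n) (P'.2 n) ≤ r) :
    ∀ z ∈ (Psi m P : Set (Q × unitInterval)), ∃ w ∈ (Psi m P' : Set (Q × unitInterval)),
      dist z w ≤ r := by
  rintro z (⟨x, hx, rfl⟩ | ⟨n, hn, rfl⟩)
  · have fin : EMetric.hausdorffEdist (P.1 : Set Q) (P'.1 : Set Q) ≠ ⊤ :=
      Metric.hausdorffEdist_ne_top_of_nonempty_of_bounded P.1.nonempty P'.1.nonempty
        P.1.isCompact.isBounded P'.1.isCompact.isBounded
    have h1 : Metric.infDist x (P'.1 : Set Q) ≤ r :=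
      le_trans (Metric.infDist_le_hausdorffDist_of_mem hx fin) hX
    obtain ⟨y, hy, hxy⟩ := P'.1.isCompact.exists_infDist_eq_dist P'.1.nonempty x
    refine ⟨(y, 0), Or.inl ⟨y, hy, rfl⟩, ?_⟩
    rw [Prod.dist_eq]
    simp only [dist_self]
    rw [max_le_iff]
    exact ⟨by rw [← hxy]; exact h1, hr⟩
  · refine ⟨(P'.2 n, un n), Or.inr ⟨n, hn, rfl⟩, ?_⟩
    rw [Prod.dist_eq]
    simp only [dist_self]
    rw [max_le_iff]
    exact ⟨hs n hn, hr⟩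

lemma continuous_Psi (m : ℕ) : Continuous (Psi m) := by
  rw [continuous_iff_continuousAt]
  intro P
  rw [ContinuousAt, Metric.tendsto_nhds]
  intro ε hε
  set U := ((fun P' : NonemptyCompacts Q × (ℕ → Q) => P'.1) ⁻¹' Metric.ball P.1 (ε/2) ∩
      ⋂ n ∈ Finset.range m, (fun P' : NonemptyCompacts Q × (ℕ → Q) => P'.2 n) ⁻¹' Metric.ball (P.2 n) (ε/2)) with hUdef
  have hU : IsOpen U := by
    apply IsOpen.inter
    · exact continuous_fst.isOpen_preimage _ Metric.isOpen_ball
    · exact isOpen_biInter_finset fun n _ =>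
        ((continuous_apply n).comp continuous_snd).isOpen_preimage _ Metric.isOpen_ball
  have hmem : P ∈ U := by
    rw [hUdef]
    refine ⟨Metric.mem_ball_self (by linarith), ?_⟩
    simp only [mem_iInter, mem_preimage]
    intro n _
    exact Metric.mem_ball_self (by linarith)
  filter_upwards [hU.mem_nhds hmem] with P' hP'
  rw [hUdef] at hP'
  obtain ⟨h1, h2⟩ := hP'
  simp only [mem_preimage, mem_iInter, Finset.mem_range] at h1 h2
  have hX : Metric.hausdorffDist (P'.1 : Set Q) (P.1 : Set Q) ≤ ε/2 := by
    have := Metric.mem_ball.1 h1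
    rw [Metric.NonemptyCompacts.dist_eq] at this
    linarith
  have hXs : Metric.hausdorffDist (P.1 : Set Q) (P'.1 : Set Q) ≤ ε/2 := by
    rwa [Metric.hausdorffDist_comm]
  have hs : ∀ n < m, dist (P'.2 n) (P.2 n) ≤ ε/2 := fun n hn => le_of_lt (h2 n hn)
  have hs' : ∀ n < m, dist (P.2 n) (P'.2 n) ≤ ε/2 := fun n hn => by
    rw [dist_comm]; exact hs n hn
  have hd : dist (Psi m P') (Psi m P) ≤ ε/2 := by
    rw [Metric.NonemptyCompacts.dist_eq]
    exact Metric.hausdorffDist_le_of_mem_dist (by linarith)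
      (psi_hd_le m P' P (by linarith) hX hs)
      (fun z hz => by
        obtain ⟨w, hw, hzw⟩ := psi_hd_le m P P' (by linarith) hXs hs' z hz
        exact ⟨w, hw, by simpa [dist_comm] using hzw⟩)
  linarith

/-- the full limit map -/
noncomputable def FF (p : {p : NonemptyCompacts Q × NonemptyCompacts Q //
    (p.2 : Set Q) ⊆ (p.1 : Set Q)}) : NonemptyCompacts (Q × unitInterval) :=
  ⟨⟨bigSet p.1.1 p.1.2, (isClosed_bigSet _ _ p.2).isCompact⟩,
    by
      obtain ⟨x, hx⟩ := p.1.1.nonempty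
      exact ⟨(x, 0), Or.inl ⟨x, hx, rfl⟩⟩⟩

noncomputable def FFm (m : ℕ) (p : {p : NonemptyCompacts Q × NonemptyCompacts Q //
    (p.2 : Set Q) ⊆ (p.1 : Set Q)}) : NonemptyCompacts (Q × unitInterval) :=
  Psi m (p.1.1, fun n => dSeq p.1.2 n)

lemma measurable_FFm (m : ℕ) : Measurable (FFm m) := by
  apply (continuous_Psi m).measurable.comp
  apply Measurable.prodMk
  · exact measurable_fst.comp measurable_subtype_coe
  · apply measurable_pi_lambda
    intro n
    exact (measurable_sel (dec n)).comp (measurable_snd.comp measurable_subtype_coe)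

lemma FFm_tendsto (p : {p : NonemptyCompacts Q × NonemptyCompacts Q //
    (p.2 : Set Q) ⊆ (p.1 : Set Q)}) :
    Filter.Tendsto (fun m => FFm m p) Filter.atTop (nhds (FF p)) := by
  rw [tendsto_iff_dist_tendsto_zero]
  apply squeeze_zero (fun m => dist_nonneg)
  · intro m
    show dist (FFm m p) (FF p) ≤ 1 / (m + 1 : ℝ)
    rw [Metric.NonemptyCompacts.dist_eq]
    apply Metric.hausdorffDist_le_of_mem_dist (by positivity)
    · rintro z (⟨x, hx, rfl⟩ | ⟨n, hn, rfl⟩)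
      · exact ⟨(x, 0), Or.inl ⟨x, hx, rfl⟩, by simp; positivity⟩
      · exact ⟨gSeq p.1.2 n, Or.inr ⟨n, rfl⟩, by simp [gSeq]; positivity⟩
    · rintro z (⟨x, hx, rfl⟩ | ⟨n, rfl⟩)
      · exact ⟨(x, 0), Or.inl ⟨x, hx, rfl⟩, by simp; positivity⟩
      · rcases lt_or_ge n m with hn | hn
        · exact ⟨(dSeq p.1.2 n, un n), Or.inr ⟨n, hn, rfl⟩, by simp [gSeq]; positivity⟩
        · refine ⟨(dSeq p.1.2 n, 0), Or.inl ⟨dSeq p.1.2 n, p.2 (dSeq_mem _ n), rfl⟩, ?_⟩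
          rw [Prod.dist_eq]
          simp only [gSeq, dist_self]
          rw [max_le_iff]
          constructor
          · positivity
          · have : dist (un n) (0 : unitInterval) = (un n : ℝ) := by
              rw [Subtype.dist_eq]
              simp [abs_of_nonneg (le_of_lt (un_pos n))]
            rw [this]
            have := un_anti hn
            rw [un_coe] at this
            exact this
  · exact tendsto_one_div_add_atTop_nhds_zero_nat

lemma measurable_FF : Measurable FF :=
  measurable_of_tendsto_metrizable measurable_FFm (tendsto_pi_nhds.2 FFm_tendsto)
/-- there is a Borel map `𝕀` on `{(X, A) ∈ K(Q)² : A ⊆ X}` with values in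
`K(Q × [0,1])` such that `𝕀(X,A) = (X × {0}) ∪ {(d_n, 1/n)}` for some sequence `d` in `A`
with dense range attaining each value infinitely often. -/
theorem exists_borel_Itilde_map :
    ∃ F : {p : NonemptyCompacts Q × NonemptyCompacts Q // (p.2 : Set Q) ⊆ (p.1 : Set Q)} →
        NonemptyCompacts (Q × unitInterval),
      Measurable F ∧
      ∀ p, ∃ d : ℕ → Q,
        (∀ n, d n ∈ (p.1.2 : Set Q)) ∧
        (p.1.2 : Set Q) ⊆ closure (Set.range d) ∧
        (∀ n, {m : ℕ | d m = d n}.Infinite) ∧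
        (F p : Set (Q × unitInterval)) =
          (fun x => (x, (0 : unitInterval))) '' (p.1.1 : Set Q) ∪
            Set.range (fun n : ℕ => (d n, un n)) :=
  ⟨FF, measurable_FF, fun p =>
    ⟨dSeq p.1.2, fun n => dSeq_mem _ n, dSeq_dense _, dSeq_infinite _, rfl⟩⟩
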